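/- Let U ⊆ ℂ be open, g₂ ∈ ℂ, and let p : U → ℂ be holomorphic with p''(x) = 6 p(x)² − g₂/2 on U. Fix E ∈ ℂ and set v(x) = 6 p(x) and Ξ(x) = E² + 3 p(x) E + 9 ( p(x)² − g₂/4 ). Then Ξ satisfies Ξ'''(x) − 4 ( v(x) − E ) Ξ'(x) − 2 v'(x) Ξ(x) = 0 on U. -/

import Mathlib

theorem Xi_solves_third_order_equation_for_Lame_l2
    (U : Set ℂ) (hU : IsOpen U) (g₂ E : ℂ) (p : ℂ → ℂ)
    (hp : DifferentiableOn ℂ p U)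
    (hp'' : ∀ x ∈ U, deriv (deriv p) x = 6 * (p x) ^ 2 - g₂ / 2) :
    ∀ x ∈ U,
      deriv (deriv (deriv (fun y => E ^ 2 + 3 * p y * E + 9 * ((p y) ^ 2 - g₂ / 4)))) x
        - 4 * (6 * p x - E) *
            deriv (fun y => E ^ 2 + 3 * p y * E + 9 * ((p y) ^ 2 - g₂ / 4)) x
        - 2 * deriv (fun y => 6 * p y) x *
            (E ^ 2 + 3 * p x * E + 9 * ((p x) ^ 2 - g₂ / 4)) = 0 := by
  intro x hx
  have hA : AnalyticOnNhd ℂ p U := hp.analyticOnNhd hU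
  have hpd : ∀ y ∈ U, DifferentiableAt ℂ p y :=
    fun y hy => hp.differentiableAt (hU.mem_nhds hy)
  have hp'd : ∀ y ∈ U, DifferentiableAt ℂ (deriv p) y :=
    fun y hy => (hA.deriv y hy).differentiableAt
  -- first derivative of Ξ on U
  have h1 : ∀ y ∈ U,
      deriv (fun z => E ^ 2 + 3 * p z * E + 9 * ((p z) ^ 2 - g₂ / 4)) y
        = 3 * deriv p y * E + 18 * p y * deriv p y := by
    intro y hy
    have hd := (hpd y hy).hasDerivAt
    have H : HasDerivAt (fun z => E ^ 2 + 3 * p z * E + 9 * ((p z) ^ 2 - g₂ / 4)) _ y :=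
      (((hd.const_mul (3:ℂ)).mul_const E).const_add (E ^ 2)).add
      (((hd.pow 2).sub_const (g₂ / 4)).const_mul (9:ℂ))
    rw [H.deriv]
    push_cast
    ring
  -- second derivative of Ξ on U
  have h2 : ∀ y ∈ U,
      deriv (deriv (fun z => E ^ 2 + 3 * p z * E + 9 * ((p z) ^ 2 - g₂ / 4))) y
        = 3 * (6 * (p y) ^ 2 - g₂ / 2) * E + 18 * (deriv p y) ^ 2
          + 18 * p y * (6 * (p y) ^ 2 - g₂ / 2) := by
    intro y hy
    have heq : deriv (fun z => E ^ 2 + 3 * p z * E + 9 * ((p z) ^ 2 - g₂ / 4))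
        =ᶠ[nhds y] fun z => 3 * deriv p z * E + 18 * p z * deriv p z :=
      Filter.eventuallyEq_of_mem (hU.mem_nhds hy) h1
    rw [heq.deriv_eq]
    have hd := (hpd y hy).hasDerivAt
    have hd' := (hp'd y hy).hasDerivAt
    have H : HasDerivAt (fun z => 3 * deriv p z * E + 18 * p z * deriv p z) _ y :=
      ((hd'.const_mul (3:ℂ)).mul_const E).add
      ((hd.const_mul (18:ℂ)).mul hd')
    rw [H.deriv, hp'' y hy]
    push_cast
    ring
  -- third derivative of Ξ at x
  have heq2 : deriv (deriv (fun z => E ^ 2 + 3 * p z * E + 9 * ((p z) ^ 2 - g₂ / 4)))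
      =ᶠ[nhds x] fun z => 3 * (6 * (p z) ^ 2 - g₂ / 2) * E + 18 * (deriv p z) ^ 2
        + 18 * p z * (6 * (p z) ^ 2 - g₂ / 2) :=
    Filter.eventuallyEq_of_mem (hU.mem_nhds hx) h2
  have hd := (hpd x hx).hasDerivAt
  have hd' := (hp'd x hx).hasDerivAt
  have H3 := ((((((hd.pow 2).const_mul (6:ℂ)).sub_const (g₂ / 2)).const_mul
        (3:ℂ)).mul_const E).add
      (((hd'.pow 2).const_mul (18:ℂ)))).add
        ((hd.const_mul (18:ℂ)).mul (((hd.pow 2).const_mul (6:ℂ)).sub_const (g₂ / 2)))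
  have h3 := heq2.deriv_eq.trans H3.deriv
  have hv : deriv (fun y => 6 * p y) x = 6 * deriv p x :=
    ((hpd x hx).hasDerivAt.const_mul (6:ℂ)).deriv
  rw [h3, h1 x hx, hv, hp'' x hx]
  push_cast [Pi.pow_apply]
  ring
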